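/- Let G be a simple graph on n vertices with maximum degree at most d, let u, v be vertices of G, let t ≥ 0 be an integer, and let ε > 0. If q_u^t and q_v^t are ε-far from collinear, then both eigenvalues of the 2×2 symmetric matrix A_{u,v} are at least ε². -/

import Mathlib

open scoped RealInnerProductSpace

open scoped Classical in
/-- The lazy random walk matrix of a graph `G` with degree parameter `d`. -/
noncomputable def lazyWalk {n : ℕ} (G : SimpleGraph (Fin n)) (d : ℕ) :
    Matrix (Fin n) (Fin n) ℝ :=
  Matrix.of fun u v =>
    if u = v then 1 - ((G.neighborSet u).ncard : ℝ) / (2 * d)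
    else if G.Adj u v then 1 / (2 * d) else 0

/-- `G` has maximum degree at most `d`. -/
def MaxDegreeLE {n : ℕ} (G : SimpleGraph (Fin n)) (d : ℕ) : Prop :=
  ∀ v, (G.neighborSet v).ncard ≤ d

/-- `p_u^t`: the endpoint distribution of a length-`t` lazy random walk from `u`. -/
noncomputable def pvec {n : ℕ} (G : SimpleGraph (Fin n)) (d t : ℕ) (u : Fin n) :
    EuclideanSpace ℝ (Fin n) :=
  WithLp.toLp 2 fun v => ((lazyWalk G d ^ t).mulVec fun w => if w = u then 1 else 0) v

/-- `q_u^t = p_u^t - (1/n) 𝟙`. -/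
noncomputable def qvec {n : ℕ} (G : SimpleGraph (Fin n)) (d t : ℕ) (u : Fin n) :
    EuclideanSpace ℝ (Fin n) :=
  WithLp.toLp 2 fun v => pvec G d t u v - 1 / n

/-- `q_u^0 = 1_u - (1/n) 𝟙`. -/
noncomputable def qzero {n : ℕ} (u : Fin n) : EuclideanSpace ℝ (Fin n) :=
  WithLp.toLp 2 fun v => (if v = u then 1 else 0) - 1 / n

/-- average of `q_u^0` over `u ∈ S`. -/
noncomputable def qavg {n : ℕ} (S : Finset (Fin n)) : EuclideanSpace ℝ (Fin n) :=
  (S.card : ℝ)⁻¹ • ∑ u ∈ S, qzero u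

/-- `a` and `b` are `ε`-close to collinear. -/
def CloseCollinear {E : Type*} [NormedAddCommGroup E] [NormedSpace ℝ E]
    (ε : ℝ) (a b : E) : Prop :=
  ∃ (ea eb w : E) (s s' : ℝ),
    ‖ea‖ ≤ ε ∧ ‖eb‖ ≤ ε ∧ a + ea = s • w ∧ b + eb = s' • w

/-- `a` and `b` are `ε`-close to antipodal. -/
def CloseAntipodal {E : Type*} [NormedAddCommGroup E] [NormedSpace ℝ E]
    (ε : ℝ) (a b : E) : Prop :=
  ∃ (ea eb w : E) (s s' : ℝ), 0 ≤ s ∧ 0 ≤ s' ∧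
    ‖ea‖ ≤ ε ∧ ‖eb‖ ≤ ε ∧ a + ea = s • w ∧ b + eb = -(s' • w)

/-- `a` and `b` are `ε`-close to podal. -/
def ClosePodal {E : Type*} [NormedAddCommGroup E] [NormedSpace ℝ E]
    (ε : ℝ) (a b : E) : Prop :=
  ∃ (ea eb w : E) (s s' : ℝ), 0 ≤ s ∧ 0 ≤ s' ∧
    ‖ea‖ ≤ ε ∧ ‖eb‖ ≤ ε ∧ a + ea = s • w ∧ b + eb = s' • w

/-- The Gram matrix `A_{u,v}` of two vectors. -/
noncomputable def gram2 {n : ℕ} (a b : EuclideanSpace ℝ (Fin n)) :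
    Matrix (Fin 2) (Fin 2) ℝ :=
  !![‖a‖ ^ 2, ⟪a, b⟫; ⟪b, a⟫, ‖b‖ ^ 2]

/-- Number of edges of `G` between `S` and `C \ S` (for `S ⊆ C`). -/
noncomputable def cutEdgesIn {n : ℕ} (G : SimpleGraph (Fin n)) (C S : Finset (Fin n)) : ℕ :=
  {p : Fin n × Fin n | p.1 ∈ S ∧ p.2 ∈ C ∧ p.2 ∉ S ∧ G.Adj p.1 p.2}.ncard

/-- Number of edges of `G` between `S` and its complement. -/
noncomputable def cutEdges {n : ℕ} (G : SimpleGraph (Fin n)) (S : Finset (Fin n)) : ℕ :=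
  cutEdgesIn G Finset.univ S

/-- The cut conductance `φ_G(S) = e(S, V∖S) / (d|S|)`. -/
noncomputable def cutCond {n : ℕ} (G : SimpleGraph (Fin n)) (d : ℕ) (S : Finset (Fin n)) : ℝ :=
  (cutEdges G S : ℝ) / (d * S.card)

/-- The (inner) conductance of the induced subgraph `G[C]` is at least `φ`. -/
def InnerConductanceGE {n : ℕ} (G : SimpleGraph (Fin n)) (d : ℕ) (C : Finset (Fin n))
    (φ : ℝ) : Prop :=
  ∀ S ⊆ C, S.Nonempty → 2 * S.card ≤ C.card →
    φ ≤ (cutEdgesIn G C S : ℝ) / (d * S.card)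

/-- `G` is `(2, φ)`-clusterable. -/
def Clusterable2 {n : ℕ} (G : SimpleGraph (Fin n)) (d : ℕ) (φ : ℝ) : Prop :=
  InnerConductanceGE G d Finset.univ φ ∨
  ∃ C₁ C₂ : Finset (Fin n), C₁.Nonempty ∧ C₂.Nonempty ∧ Disjoint C₁ C₂ ∧
    C₁ ∪ C₂ = Finset.univ ∧ InnerConductanceGE G d C₁ φ ∧ InnerConductanceGE G d C₂ φ

/-- `G` is `ε`-far from `(2, φ)`-clusterable. -/
def FarFromClusterable2 {n : ℕ} (G : SimpleGraph (Fin n)) (d : ℕ) (ε φ : ℝ) : Prop :=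
  ∀ G' : SimpleGraph (Fin n), MaxDegreeLE G' d →
    ((symmDiff G.edgeSet G'.edgeSet).ncard : ℝ) ≤ ε * d * n →
    ¬ Clusterable2 G' d φ

/-- The span of the eigenvectors of `M` with eigenvalue greater than `c`. -/
noncomputable def heavySpace {n : ℕ} (M : Matrix (Fin n) (Fin n) ℝ) (c : ℝ) :
    Submodule ℝ (EuclideanSpace ℝ (Fin n)) :=
  ⨆ μ : {μ : ℝ // c < μ}, Module.End.eigenspace (Matrix.toEuclideanLin M) (μ : ℝ)

/-- Orthogonal projection onto the span of the eigenvectors of `M` with eigenvalue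
greater than `c`. -/
noncomputable def heavyProj {n : ℕ} (M : Matrix (Fin n) (Fin n) ℝ) (c : ℝ)
    (x : EuclideanSpace ℝ (Fin n)) : EuclideanSpace ℝ (Fin n) :=
  (Submodule.orthogonalProjectionOnto (heavySpace M c) x : EuclideanSpace ℝ (Fin n))

lemma gram_eig_aux {n : ℕ} (a b : EuclideanSpace ℝ (Fin n)) (μ : ℝ) (x : Fin 2 → ℝ)
    (hx : (gram2 a b).mulVec x = μ • x) :
    ‖x 0 • a + x 1 • b‖ ^ 2 = μ * ((x 0) ^ 2 + (x 1) ^ 2) := by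
  have h0 := congrFun hx 0
  have h1 := congrFun hx 1
  simp [gram2, Matrix.mulVec, dotProduct, Fin.sum_univ_two, Matrix.vecHead, Matrix.vecTail] at h0 h1
  have e1 : (∑ i, a i * b i) = ⟪a, b⟫ := by
    simp [PiLp.inner_apply, RCLike.inner_apply, conj_trivial]
    exact Finset.sum_congr rfl fun i _ => mul_comm _ _
  have e2 : (∑ i, b i * a i) = ⟪a, b⟫ := by
    rw [real_inner_comm]
    simp [PiLp.inner_apply, RCLike.inner_apply, conj_trivial]
    exact Finset.sum_congr rfl fun i _ => mul_comm _ _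
  rw [real_inner_comm a b] at h1
  have hexp : ⟪x 0 • a + x 1 • b, x 0 • a + x 1 • b⟫ =
      (x 0)^2 * ⟪a, a⟫ + 2 * (x 0 * x 1) * ⟪a, b⟫ + (x 1)^2 * ⟪b, b⟫ := by
    simp only [inner_add_left, inner_add_right, real_inner_smul_left, real_inner_smul_right,
      real_inner_comm b a]
    ring
  rw [real_inner_self_eq_norm_sq, real_inner_self_eq_norm_sq, real_inner_self_eq_norm_sq] at hexp
  linear_combination hexp + x 0 * h0 + x 1 * h1

lemma err_small_aux {n : ℕ} (c : EuclideanSpace ℝ (Fin n)) (r S μ ε : ℝ)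
    (hSpos : 0 < S) (hr : r ^ 2 ≤ S) (hkey : ‖c‖ ^ 2 = μ * S) (hμ0 : 0 ≤ μ)
    (hμ : μ < ε ^ 2) (hε0 : 0 < ε) : ‖(-(r / S)) • c‖ ≤ ε := by
  have h1 : ‖(-(r / S)) • c‖ ^ 2 = (r / S) ^ 2 * ‖c‖ ^ 2 := by
    rw [norm_smul, mul_pow, Real.norm_eq_abs, sq_abs, neg_pow]
    ring
  have h2 : ‖(-(r / S)) • c‖ ^ 2 ≤ μ := by
    rw [h1, hkey]
    have h3 : (r / S) ^ 2 * (μ * S) = μ * (r ^ 2 / S) := by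
      field_simp
    rw [h3]
    calc μ * (r ^ 2 / S) ≤ μ * 1 := by
          apply mul_le_mul_of_nonneg_left _ hμ0
          exact (div_le_one hSpos).mpr hr
      _ = μ := mul_one μ
  nlinarith [norm_nonneg ((-(r / S)) • c)]
open Matrix in
theorem stmt1 {n d : ℕ} (hd : 1 ≤ d) (G : SimpleGraph (Fin n)) (hdeg : MaxDegreeLE G d)
    (u v : Fin n) (t : ℕ) (ε : ℝ) (hε0 : 0 < ε)
    (h : ¬ CloseCollinear ε (qvec G d t u) (qvec G d t v)) :
    ∀ (μ : ℝ) (x : Fin 2 → ℝ), x ≠ 0 →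
      (gram2 (qvec G d t u) (qvec G d t v)).mulVec x = μ • x → ε ^ 2 ≤ μ := by
  intro μ x hx0 hx
  by_contra hμ
  push_neg at hμ
  apply h
  set a := qvec G d t u
  set b := qvec G d t v
  set c : EuclideanSpace ℝ (Fin n) := x 0 • a + x 1 • b with hc
  have hkey : ‖c‖ ^ 2 = μ * ((x 0) ^ 2 + (x 1) ^ 2) := gram_eig_aux a b μ x hx
  set S : ℝ := (x 0) ^ 2 + (x 1) ^ 2 with hS
  have hSpos : 0 < S := by
    rcases (by
      by_contra hcon
      push_neg at hcon
      exact hx0 (funext fun i => by fin_cases i <;> simp [hcon.1, hcon.2]) :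
      x 0 ≠ 0 ∨ x 1 ≠ 0) with h' | h' <;> positivity
  have hμ0 : 0 ≤ μ := by nlinarith [sq_nonneg ‖c‖]
  set ea : EuclideanSpace ℝ (Fin n) := (-(x 0 / S)) • c with hea
  set eb : EuclideanSpace ℝ (Fin n) := (-(x 1 / S)) • c with heb
  have hna : ‖ea‖ ≤ ε :=
    err_small_aux c (x 0) S μ ε hSpos (by nlinarith [sq_nonneg (x 1)]) hkey hμ0 hμ hε0
  have hnb : ‖eb‖ ≤ ε :=
    err_small_aux c (x 1) S μ ε hSpos (by nlinarith [sq_nonneg (x 0)]) hkey hμ0 hμ hε0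
  have hzero : x 0 • (a + ea) + x 1 • (b + eb) = 0 := by
    rw [hea, heb, hc]
    match_scalars <;> field_simp <;> ring
  by_cases h0 : x 0 = 0
  · have h1 : x 1 ≠ 0 := by
      intro h1
      exact hx0 (funext fun i => by fin_cases i <;> simp [h0, h1])
    have hb0 : b + eb = 0 := by
      have : x 1 • (b + eb) = 0 := by rw [h0] at hzero; simpa using hzero
      exact (smul_eq_zero.mp this).resolve_left h1
    exact ⟨ea, eb, a + ea, 1, 0, hna, hnb, (one_smul ℝ _).symm, by rw [hb0, zero_smul]⟩
  · refine ⟨ea, eb, b + eb, -(x 1 / x 0), 1, hna, hnb, ?_, (one_smul ℝ _).symm⟩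
    apply smul_right_injective (EuclideanSpace ℝ (Fin n)) h0
    show x 0 • (a + ea) = x 0 • (-(x 1 / x 0) • (b + eb))
    rw [smul_smul]
    have hcoe : x 0 * -(x 1 / x 0) = -(x 1) := by field_simp
    rw [hcoe]
    have h2 := hzero
    rw [add_eq_zero_iff_eq_neg] at h2
    rw [h2, neg_smul]
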